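/- Let a 2-SAT instance be a conjunction of clauses each of which is a disjunction of at most two literals over variables x_1,...,x_n. If there exist self-adjoint projections X_1,...,X_n on a finite-dimensional Hilbert space (with X_j^2 = X_j) such that projections of variables in a common clause commute and each clause is satisfied as an operator identity (e.g., a clause x_i ∨ x_j becomes (I - X_i)(I - X_j) = 0, with literals ¬x replaced by I - X), then the 2-SAT instance is classically satisfiable. -/

import Mathlib

open Matrix

/-- A literal is a variable index together with a sign (`true` = positive). -/
abbrev Lit (n : ℕ) := Fin n × Bool

/-- The operator of a literal: `X i` for a positive literal, `I - X i` for a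
negative one. -/
def litOp {n d : ℕ} (X : Fin n → Matrix (Fin d) (Fin d) ℂ) (l : Lit n) :
    Matrix (Fin d) (Fin d) ℂ :=
  if l.2 then X l.1 else 1 - X l.1

/-- The Boolean value of a literal under an assignment. -/
def litVal {n : ℕ} (a : Fin n → Bool) (l : Lit n) : Bool :=
  if l.2 then a l.1 else ! a l.1


variable {d : ℕ}

/-- The (real part of the) quadratic form of a matrix. -/
noncomputable def qf (M : Matrix (Fin d) (Fin d) ℂ) (w : Fin d → ℂ) : ℝ :=
  (star w ⬝ᵥ M *ᵥ w).re

lemma qf_sub (M N : Matrix (Fin d) (Fin d) ℂ) (w : Fin d → ℂ) :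
    qf (M - N) w = qf M w - qf N w := by
  simp [qf, Matrix.sub_mulVec, dotProduct_sub]

lemma qf_add (M N : Matrix (Fin d) (Fin d) ℂ) (w : Fin d → ℂ) :
    qf (M + N) w = qf M w + qf N w := by
  simp [qf, Matrix.add_mulVec, dotProduct_add]

/-- Nonnegativity of the form of a hermitian projection. -/
lemma qf_proj_nonneg {R : Matrix (Fin d) (Fin d) ℂ} (hR : R.IsHermitian)
    (hRR : R * R = R) (w : Fin d → ℂ) : 0 ≤ qf R w := by
  have h1 : star (R *ᵥ w) ⬝ᵥ (R *ᵥ w) = star w ⬝ᵥ R *ᵥ w := by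
    calc star (R *ᵥ w) ⬝ᵥ (R *ᵥ w) = (star w ᵥ* Rᴴ) ⬝ᵥ (R *ᵥ w) := by rw [star_mulVec]
    _ = (star w ᵥ* R) ⬝ᵥ (R *ᵥ w) := by rw [hR.eq]
    _ = star w ⬝ᵥ (R *ᵥ (R *ᵥ w)) := (dotProduct_mulVec _ _ _).symm
    _ = star w ⬝ᵥ ((R * R) *ᵥ w) := by rw [mulVec_mulVec]
    _ = star w ⬝ᵥ (R *ᵥ w) := by rw [hRR]
  open scoped ComplexOrder in
  have h2 : (0 : ℂ) ≤ star (R *ᵥ w) ⬝ᵥ (R *ᵥ w) := dotProduct_star_self_nonneg _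
  rw [Complex.le_def] at h2
  rw [qf, ← h1]
  simpa using h2.1

lemma star_single_one (j : Fin d) :
    star (Pi.single j (1:ℂ) : Fin d → ℂ) = (Pi.single j (1:ℂ) : Fin d → ℂ) := by
  rw [← Pi.single_star, star_one]

lemma cf_single (A : Matrix (Fin d) (Fin d) ℂ) (j k : Fin d) :
    star (Pi.single j (1:ℂ) : Fin d → ℂ) ⬝ᵥ A *ᵥ (Pi.single k (1:ℂ) : Fin d → ℂ) = A j k := by
  rw [star_single_one]
  simp [Matrix.mulVec_single, single_dotProduct]

lemma cf_single' (A : Matrix (Fin d) (Fin d) ℂ) (j k : Fin d) :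
    (Pi.single j (1:ℂ) : Fin d → ℂ) ⬝ᵥ A *ᵥ (Pi.single k (1:ℂ) : Fin d → ℂ) = A j k := by
  simp [Matrix.mulVec_single, single_dotProduct]

lemma qf_forall_zero {A : Matrix (Fin d) (Fin d) ℂ} (hA : A.IsHermitian)
    (h : ∀ w, qf A w = 0) : A = 0 := by
  ext j k
  have hdiag : ∀ i, A i i = 0 := by
    intro i
    have h1 : (A i i).re = 0 := by
      have := h (Pi.single i 1)
      rwa [qf, cf_single] at this
    have h2 := hA.coe_re_apply_self i
    have h3 : RCLike.re (A i i) = (A i i).re := rfl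
    rw [h3, h1] at h2
    simpa using h2.symm
  rcases eq_or_ne j k with rfl | hjk
  · simp [hdiag j]
  · have hk : A k j = starRingEnd ℂ (A j k) := by
      have h5 := congrFun (congrFun hA.eq k) j
      rw [Matrix.conjTranspose_apply, Complex.star_def] at h5
      exact h5.symm
    have e1 := h ((Pi.single j 1 : Fin d → ℂ) + (Pi.single k 1 : Fin d → ℂ))
    have e2 := h ((Pi.single j 1 : Fin d → ℂ) + Complex.I • (Pi.single k 1 : Fin d → ℂ))
    rw [qf] at e1 e2
    simp only [star_add, star_smul, Matrix.mulVec_add, Matrix.mulVec_smul,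
      dotProduct_add, add_dotProduct, smul_dotProduct, dotProduct_smul,
      cf_single, cf_single', star_single_one, hk, hdiag, smul_eq_mul,
      Complex.star_def, Complex.conj_I] at e1 e2
    simp only [Complex.add_re, Complex.zero_re, Complex.conj_re, Complex.mul_re,
      Complex.mul_im, Complex.neg_re, Complex.neg_im, Complex.I_re, Complex.I_im,
      Complex.conj_im, Complex.zero_im, Complex.add_im] at e1 e2
    show A j k = 0
    rw [Complex.ext_iff]
    constructor <;> [skip; skip] <;> simp <;> nlinarith [e1, e2]

lemma qf_expand (M : Matrix (Fin d) (Fin d) ℂ) (w u : Fin d → ℂ) (s : ℝ) :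
    qf M (w + (s:ℂ) • u) = qf M w
      + s * (star u ⬝ᵥ M *ᵥ w + star w ⬝ᵥ M *ᵥ u).re
      + s^2 * qf M u := by
  have hc : star (w + (s:ℂ)•u) ⬝ᵥ M *ᵥ (w + (s:ℂ)•u)
      = star w ⬝ᵥ M *ᵥ w + (s:ℂ) * (star u ⬝ᵥ M *ᵥ w + star w ⬝ᵥ M *ᵥ u)
        + ((s:ℂ)*(s:ℂ)) * (star u ⬝ᵥ M *ᵥ u) := by
    simp only [star_add, star_smul, Matrix.mulVec_add, Matrix.mulVec_smul,
      dotProduct_add, add_dotProduct, smul_dotProduct, dotProduct_smul,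
      smul_eq_mul, Complex.star_def, Complex.conj_ofReal]
    ring
  rw [qf, hc]
  have h2 : ((s:ℂ)*(s:ℂ)) = ((s*s : ℝ) : ℂ) := by push_cast; ring
  rw [h2, Complex.add_re, Complex.add_re, Complex.re_ofReal_mul, Complex.re_ofReal_mul]
  rw [qf, qf]
  ring

lemma exists_good (L : List (Matrix (Fin d) (Fin d) ℂ))
    (h : ∀ A ∈ L, A.IsHermitian ∧ A ≠ 0) :
    ∃ w : Fin d → ℂ, ∀ A ∈ L, qf A w ≠ 0 := by
  induction L with
  | nil => exact ⟨0, by simp⟩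
  | cons A L ih =>
    obtain ⟨w, hw⟩ := ih (fun B hB => h B (List.mem_cons_of_mem _ hB))
    obtain ⟨hAh, hAne⟩ := h A List.mem_cons_self
    have hu : ∃ u, qf A u ≠ 0 := by
      by_contra hcon
      push_neg at hcon
      exact hAne (qf_forall_zero hAh hcon)
    obtain ⟨u, hu⟩ := hu
    -- For each matrix, the bad set of s is the root set of a nonzero polynomial.
    have key : ∀ M : Matrix (Fin d) (Fin d) ℂ, (qf M w ≠ 0 ∨ qf M u ≠ 0) →
        {s : ℝ | qf M (w + (s:ℂ) • u) = 0}.Finite := by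
      intro M hM
      set b : ℝ := (star u ⬝ᵥ M *ᵥ w + star w ⬝ᵥ M *ᵥ u).re with hb
      have hsub : {s : ℝ | qf M (w + (s:ℂ) • u) = 0} ⊆
          {s : ℝ | (Polynomial.C (qf M w) + Polynomial.C b * Polynomial.X
            + Polynomial.C (qf M u) * Polynomial.X ^ 2).IsRoot s} := by
        intro s hs
        simp only [Set.mem_setOf_eq] at hs ⊢
        rw [qf_expand] at hs
        simp only [Polynomial.IsRoot, Polynomial.eval_add, Polynomial.eval_mul,
          Polynomial.eval_C, Polynomial.eval_X, Polynomial.eval_pow]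
        nlinarith [hs]
      refine Set.Finite.subset (Polynomial.finite_setOf_isRoot ?_) hsub
      intro hzero
      rcases hM with hM | hM
      · apply hM
        have := congrArg (fun p => Polynomial.coeff p 0) hzero
        simpa [Polynomial.coeff_add, Polynomial.coeff_C] using this
      · apply hM
        have := congrArg (fun p => Polynomial.coeff p 2) hzero
        simpa [Polynomial.coeff_add, Polynomial.coeff_C] using this
    have hfin : (⋃ M ∈ (A :: L), {s : ℝ | qf M (w + (s:ℂ) • u) = 0}).Finite := by
      apply Set.Finite.biUnion (List.finite_toSet _)
      intro M hM
      rcases List.mem_cons.mp hM with rfl | hM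
      · exact key M (Or.inr hu)
      · exact key M (Or.inl (hw M hM))
    obtain ⟨s, hs⟩ := (Set.Infinite.nonempty (Set.Finite.infinite_compl hfin))
    refine ⟨w + (s:ℂ) • u, ?_⟩
    intro B hB hzero
    apply hs
    exact Set.mem_biUnion hB hzero

lemma comm_one_sub {R : Type*} [Ring R] {a b : R} (h : Commute a b) :
    Commute (1 - a) (1 - b) :=
  (Commute.one_right (1 - a)).sub_right ((Commute.one_left b).sub_left h)

lemma proj_one_sub {M : Matrix (Fin d) (Fin d) ℂ} (hM : M * M = M) :
    (1 - M) * (1 - M) = 1 - M := by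
  have h : (1 - M) * (1 - M) = 1 - M - M + M * M := by noncomm_ring
  rw [h, hM]; abel

lemma clause_le {P Q : Matrix (Fin d) (Fin d) ℂ} (hP : P.IsHermitian)
    (hQ : Q.IsHermitian) (hPP : P * P = P) (hQQ : Q * Q = Q)
    (hcomm : P * Q = Q * P) (hPQ : P * Q = 0) (w : Fin d → ℂ) :
    qf P w + qf Q w ≤ qf 1 w := by
  have hQP : Q * P = 0 := by rw [← hcomm]; exact hPQ
  have hR : (1 - P - Q).IsHermitian :=
    (Matrix.isHermitian_one.sub hP).sub hQ
  have hRR : (1 - P - Q) * (1 - P - Q) = 1 - P - Q := by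
    have h : (1 - P - Q) * (1 - P - Q)
        = 1 - P - Q - P + P * P + P * Q - Q + Q * P + Q * Q := by noncomm_ring
    rw [h, hPP, hQQ, hPQ, hQP]; abel
  have h0 := qf_proj_nonneg hR hRR w
  rw [qf_sub, qf_sub] at h0
  linarith

/-- 2-SAT* = 2-SAT: if a 2-SAT instance (a list of clauses, each a disjunction of
two literals) has a quantum satisfying assignment by commuting self-adjoint
projections, then it is classically satisfiable. -/
theorem two_sat_star_eq_two_sat {n d : ℕ} (hd : 0 < d)
    (clauses : List (Lit n × Lit n))
    (X : Fin n → Matrix (Fin d) (Fin d) ℂ)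
    (h_sa : ∀ i, (X i).IsHermitian)
    (h_proj : ∀ i, X i * X i = X i)
    (h_comm : ∀ c ∈ clauses, Commute (X c.1.1) (X c.2.1))
    (h_clause : ∀ c ∈ clauses, (1 - litOp X c.1) * (1 - litOp X c.2) = 0) :
    ∃ a : Fin n → Bool, ∀ c ∈ clauses, litVal a c.1 = true ∨ litVal a c.2 = true := by
  classical
  -- a good vector: the form of `X i` never takes the value `‖w‖²/2`
  have hL : ∀ A ∈ List.ofFn (fun i : Fin n => X i + X i - 1), A.IsHermitian ∧ A ≠ 0 := by
    intro A hA
    rw [List.mem_ofFn] at hA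
    obtain ⟨i, rfl⟩ := hA
    refine ⟨((h_sa i).add (h_sa i)).sub Matrix.isHermitian_one, ?_⟩
    intro h0
    have hsum : X i + X i = 1 := sub_eq_zero.mp h0
    have h1 : X i * (X i + X i) = X i := by rw [hsum, mul_one]
    rw [mul_add, h_proj i] at h1
    have h2 : X i = 0 := by
      have h3 : X i + X i = X i + 0 := by rw [h1, add_zero]
      exact add_left_cancel h3
    rw [h2, add_zero] at hsum
    have e := congrFun (congrFun hsum ⟨0, hd⟩) ⟨0, hd⟩
    simp [Matrix.one_apply_eq] at e
  obtain ⟨w, hw⟩ := exists_good _ hL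
  have hwX : ∀ i, 2 * qf (X i) w ≠ qf 1 w := by
    intro i heq
    have h1 := hw (X i + X i - 1) (by rw [List.mem_ofFn]; exact ⟨i, rfl⟩)
    rw [qf_sub, qf_add] at h1
    apply h1; linarith
  refine ⟨fun i => decide (qf 1 w < 2 * qf (X i) w), ?_⟩
  intro c hc
  by_contra hcon
  push_neg at hcon
  obtain ⟨hc1, hc2⟩ := hcon
  -- per-literal consequence of a false literal
  have hlit : ∀ l : Lit n, litVal (fun i => decide (qf 1 w < 2 * qf (X i) w)) l ≠ true →
      qf 1 w < 2 * qf (1 - litOp X l) w := by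
    rintro ⟨i, b⟩ hfalse
    cases b
    · -- negative literal false : a i = true
      have ha : qf 1 w < 2 * qf (X i) w := by
        simp [litVal] at hfalse
        exact hfalse
      have hre : (1 : Matrix (Fin d) (Fin d) ℂ) - litOp X (i, false) = X i := by
        simp [litOp, sub_sub_cancel]
      rw [hre]; exact ha
    · -- positive literal false : a i = false
      have ha : 2 * qf (X i) w < qf 1 w := by
        simp [litVal] at hfalse
        exact lt_of_le_of_ne hfalse (hwX i)
      have hre : (1 : Matrix (Fin d) (Fin d) ℂ) - litOp X (i, true) = 1 - X i := by
        simp [litOp]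
      rw [hre, qf_sub]
      linarith
  have key1 := hlit c.1 hc1
  have key2 := hlit c.2 hc2
  -- hermitian-projection facts about 1 - litOp
  have hPfacts : ∀ l : Lit n, (1 - litOp X l).IsHermitian ∧
      (1 - litOp X l) * (1 - litOp X l) = 1 - litOp X l := by
    rintro ⟨i, b⟩
    cases b
    · have hre : (1 : Matrix (Fin d) (Fin d) ℂ) - litOp X (i, false) = X i := by
        simp [litOp, sub_sub_cancel]
      rw [hre]; exact ⟨h_sa i, h_proj i⟩
    · have hre : (1 : Matrix (Fin d) (Fin d) ℂ) - litOp X (i, true) = 1 - X i := by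
        simp [litOp]
      rw [hre]; exact ⟨Matrix.isHermitian_one.sub (h_sa i), proj_one_sub (h_proj i)⟩
  have hcm : Commute (1 - litOp X c.1) (1 - litOp X c.2) := by
    apply comm_one_sub
    have hbase := h_comm c hc
    rcases c with ⟨⟨i, bi⟩, ⟨j, bj⟩⟩
    simp only [litOp]
    cases bi <;> cases bj <;> simp only [if_pos rfl, if_neg Bool.false_ne_true] <;>
      [skip; skip; skip; skip]
    · exact comm_one_sub hbase
    · exact (Commute.one_left _).sub_left hbase
    · exact (Commute.one_right _).sub_right hbase
    · exact hbase
  have hle := clause_le (hPfacts c.1).1 (hPfacts c.2).1 (hPfacts c.1).2 (hPfacts c.2).2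
    hcm (h_clause c hc) w
  linarith
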